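/- For a Young diagram λ, define the content of a cell c in row i and column j (1-indexed) as cn(c) = j - i, and define c_λ = δ + (s - s⁻¹)(α·Σ_{c∈λ} s^{2cn(c)} - α⁻¹·Σ_{c∈λ} s^{-2cn(c)}) in ℚ(α,s), where δ = (α-α⁻¹)/(s-s⁻¹) + 1. Then the map λ ↦ c_λ is injective on the set of all Young diagrams: if λ ≠ λ′ then c_λ ≠ c_{λ′}. -/
import Mathlib


open scoped BigOperators

noncomputable abbrev Kf : Type := FractionRing (MvPolynomial (Fin 2) ℚ)

noncomputable def α : Kf := algebraMap (MvPolynomial (Fin 2) ℚ) Kf (MvPolynomial.X 0)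
noncomputable def s : Kf := algebraMap (MvPolynomial (Fin 2) ℚ) Kf (MvPolynomial.X 1)
noncomputable def δ : Kf := (α - α⁻¹) / (s - s⁻¹) + 1

/-- content of a cell -/
def cn (c : ℕ × ℕ) : ℤ := (c.2 : ℤ) - (c.1 : ℤ)

/-- the eigenvalue `c_λ` of the Hopf map for a Young diagram -/
noncomputable def cY (lam : YoungDiagram) : Kf :=
  δ + (s - s⁻¹) *
    (α * ∑ c ∈ lam.cells, s ^ (2 * cn c) - α⁻¹ * ∑ c ∈ lam.cells, s ^ (-(2 * cn c)))

namespace CYAux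

open Finset MvPolynomial

/-! ### Combinatorial part: a Young diagram is determined by its content counts -/

def mcount (l : YoungDiagram) (t : ℤ) : ℕ := (l.cells.filter fun c => cn c = t).card

lemma downset_eq_range {S : Finset ℕ} (h : ∀ a b, a ≤ b → b ∈ S → a ∈ S) :
    S = Finset.range S.card := by
  have hsub : S ⊆ Finset.range S.card := by
    intro x hx
    have : Finset.range (x+1) ⊆ S := by
      intro y hy
      exact h y x (by simpa using Nat.lt_succ_iff.mp (Finset.mem_range.mp hy)) hx
    have := Finset.card_le_card this
    simp only [Finset.card_range] at this
    exact Finset.mem_range.mpr this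
  exact (Finset.eq_of_subset_of_card_le hsub (by simp))

lemma mem_iff_lt_mcount (l : YoungDiagram) (i k : ℕ) :
    (i, i + k) ∈ l ↔ i < mcount l k := by
  set S : Finset ℕ := (l.cells.filter fun c => cn c = (k:ℤ)).image Prod.fst with hS
  have hmem : ∀ i : ℕ, i ∈ S ↔ (i, i + k) ∈ l := by
    intro i
    constructor
    · intro hi
      obtain ⟨⟨a, b⟩, hc, rfl⟩ := Finset.mem_image.mp hi
      have hc' := Finset.mem_filter.mp hc
      have hb : b = a + k := by have := hc'.2; unfold cn at this; simp at this; omega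
      have := hc'.1
      rw [YoungDiagram.mem_cells] at this
      simpa [← hb]
    · intro hi
      apply Finset.mem_image.mpr
      refine ⟨(i, i + k), Finset.mem_filter.mpr ⟨(YoungDiagram.mem_cells _).mpr hi, ?_⟩, rfl⟩
      unfold cn; push_cast; ring
  have hcard : S.card = mcount l k := by
    rw [hS]
    apply Finset.card_image_of_injOn
    intro c hc d hd hcd
    have hc' := (Finset.mem_filter.mp hc).2
    have hd' := (Finset.mem_filter.mp hd).2
    unfold cn at hc' hd'
    have : c.2 = d.2 := by omega
    exact Prod.ext hcd this
  have hdown : ∀ a b, a ≤ b → b ∈ S → a ∈ S := by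
    intro a b hab hb
    rw [hmem] at hb ⊢
    exact l.up_left_mem hab (by omega) hb
  rw [← hmem, downset_eq_range hdown, Finset.mem_range, hcard]

lemma mcount_transpose (l : YoungDiagram) (t : ℤ) :
    mcount l.transpose t = mcount l (-t) := by
  unfold mcount
  rw [show (l.transpose.cells.filter fun c => cn c = t)
      = (l.cells.filter fun c => cn c = -t).image Prod.swap from ?_]
  · exact Finset.card_image_of_injective _ Prod.swap_injective
  · ext c
    simp only [Finset.mem_filter, Finset.mem_image, YoungDiagram.mem_cells,
      YoungDiagram.mem_transpose]
    constructor
    · rintro ⟨h1, h2⟩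
      exact ⟨c.swap, ⟨h1, by unfold cn at h2 ⊢; cases c; simp_all; omega⟩, by simp⟩
    · rintro ⟨d, ⟨h1, h2⟩, rfl⟩
      exact ⟨by simpa using h1, by unfold cn at h2 ⊢; cases d; simp_all; omega⟩

lemma eq_of_mcount_eq {l m : YoungDiagram} (h : ∀ t, mcount l t = mcount m t) : l = m := by
  ext ⟨i, j⟩
  rw [YoungDiagram.mem_cells, YoungDiagram.mem_cells]
  rcases le_or_gt i j with hij | hij
  · obtain ⟨k, rfl⟩ := Nat.exists_eq_add_of_le hij
    rw [mem_iff_lt_mcount, mem_iff_lt_mcount, h]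
  · obtain ⟨k, rfl⟩ := Nat.exists_eq_add_of_le hij.le
    have hl := mem_iff_lt_mcount l.transpose j k
    have hm := mem_iff_lt_mcount m.transpose j k
    rw [YoungDiagram.mem_transpose] at hl hm
    simp only [Prod.swap_prod_mk] at hl hm
    rw [hl, hm, mcount_transpose, mcount_transpose, h]

/-! ### Algebraic part -/

abbrev Rp : Type := MvPolynomial (Fin 2) ℚ
noncomputable abbrev φf : Rp →+* Kf := algebraMap Rp Kf

lemma phi_inj : Function.Injective φf := IsFractionRing.injective Rp Kf

lemma s_ne : s ≠ 0 := by
  unfold s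
  rw [Ne, map_eq_zero_iff _ phi_inj]
  exact MvPolynomial.X_ne_zero 1

lemma α_ne : α ≠ 0 := by
  unfold α
  rw [Ne, map_eq_zero_iff _ phi_inj]
  exact MvPolynomial.X_ne_zero 0

lemma sq_ne : s ^ 2 ≠ 1 := by
  unfold s
  rw [← map_pow, show (1 : Kf) = φf 1 from (map_one _).symm, Ne,
    phi_inj.eq_iff]
  intro h
  have := congrArg MvPolynomial.totalDegree h
  rw [MvPolynomial.totalDegree_X_pow, MvPolynomial.totalDegree_one] at this
  omega

lemma ss_ne : s - s⁻¹ ≠ 0 := by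
  intro h
  apply sq_ne
  have : s = s⁻¹ := sub_eq_zero.mp h
  rw [pow_two]
  nth_rewrite 2 [this]
  exact mul_inv_cancel₀ s_ne

lemma cell_bound {l : YoungDiagram} {c : ℕ × ℕ} (h : c ∈ l.cells) :
    c.1 < l.cells.card ∧ c.2 < l.cells.card := by
  constructor
  · have hsub : (Finset.range (c.1+1)).image (fun k => (k, c.2)) ⊆ l.cells := by
      intro x hx
      obtain ⟨k, hk, rfl⟩ := Finset.mem_image.mp hx
      rw [YoungDiagram.mem_cells] at h ⊢
      exact l.up_left_mem (by simpa using Nat.lt_succ_iff.mp (Finset.mem_range.mp hk)) le_rfl h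
    have := Finset.card_le_card hsub
    rwa [Finset.card_image_of_injective _ (fun a b hab => by simpa using hab),
      Finset.card_range, Nat.succ_le_iff] at this
  · have hsub : (Finset.range (c.2+1)).image (fun k => (c.1, k)) ⊆ l.cells := by
      intro x hx
      obtain ⟨k, hk, rfl⟩ := Finset.mem_image.mp hx
      rw [YoungDiagram.mem_cells] at h ⊢
      exact l.up_left_mem le_rfl (by simpa using Nat.lt_succ_iff.mp (Finset.mem_range.mp hk)) h
    have := Finset.card_le_card hsub
    rwa [Finset.card_image_of_injective _ (fun a b hab => by simpa using hab),
      Finset.card_range, Nat.succ_le_iff] at this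

lemma key (l : YoungDiagram) (N : ℕ) (hN : l.cells.card ≤ N) :
    α ^ 2 * ((s ^ (2 * (N:ℤ))) * ∑ c ∈ l.cells, s ^ (2 * cn c))
      - (s ^ (2 * (N:ℤ))) * ∑ c ∈ l.cells, s ^ (-(2 * cn c))
    = φf (X 0 ^ 2 * (∑ c ∈ l.cells, X 1 ^ (2 * (N:ℤ) + 2 * cn c).toNat)
          - ∑ c ∈ l.cells, X 1 ^ (2 * (N:ℤ) - 2 * cn c).toNat) := by
  have hb : ∀ c ∈ l.cells, -(N:ℤ) < cn c ∧ cn c < N := by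
    intro c hc
    obtain ⟨h1, h2⟩ := cell_bound hc
    unfold cn
    omega
  rw [map_sub, map_mul, map_pow, map_sum, map_sum]
  have hA : (s ^ (2 * (N:ℤ))) * ∑ c ∈ l.cells, s ^ (2 * cn c)
      = ∑ c ∈ l.cells, φf (X 1 ^ (2 * (N:ℤ) + 2 * cn c).toNat) := by
    rw [Finset.mul_sum]
    refine Finset.sum_congr rfl fun c hc => ?_
    rw [map_pow, ← zpow_add₀ s_ne]
    show _ = (s : Kf) ^ ((2 * (N:ℤ) + 2 * cn c).toNat)
    rw [← zpow_natCast s, Int.toNat_of_nonneg (by have := (hb c hc).1; omega)]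
  have hB : (s ^ (2 * (N:ℤ))) * ∑ c ∈ l.cells, s ^ (-(2 * cn c))
      = ∑ c ∈ l.cells, φf (X 1 ^ (2 * (N:ℤ) - 2 * cn c).toNat) := by
    rw [Finset.mul_sum]
    refine Finset.sum_congr rfl fun c hc => ?_
    rw [map_pow, ← zpow_add₀ s_ne]
    show _ = (s : Kf) ^ ((2 * (N:ℤ) - 2 * cn c).toNat)
    rw [← zpow_natCast s, Int.toNat_of_nonneg (by have := (hb c hc).2; omega)]
    ring_nf
  rw [hA, hB]
  rfl

lemma coeff_eq (F : Finset (ℕ×ℕ)) (e g : (ℕ×ℕ) → ℕ) (k : ℕ) :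
    MvPolynomial.coeff (Finsupp.single 0 2 + Finsupp.single 1 k)
      ((X 0 : Rp) ^ 2 * (∑ c ∈ F, X 1 ^ e c) - ∑ c ∈ F, X 1 ^ g c)
    = ((F.filter fun c => e c = k).card : ℚ) := by
  rw [MvPolynomial.coeff_sub, Finset.mul_sum]
  have h1 : ∀ c : ℕ×ℕ, (X 0 : Rp) ^ 2 * X 1 ^ e c
      = monomial (Finsupp.single 0 2 + Finsupp.single 1 (e c)) 1 := by
    intro c
    rw [X_pow_eq_monomial, X_pow_eq_monomial, monomial_mul, one_mul]
  have h2 : MvPolynomial.coeff (Finsupp.single 0 2 + Finsupp.single 1 k)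
      (∑ c ∈ F, (X 1 : Rp) ^ g c) = 0 := by
    rw [MvPolynomial.coeff_sum]
    apply Finset.sum_eq_zero
    intro c _
    rw [X_pow_eq_monomial, MvPolynomial.coeff_monomial, if_neg]
    intro h
    have := DFunLike.congr_fun h (0 : Fin 2)
    simp [Finsupp.single_apply] at this
  rw [h2, sub_zero, MvPolynomial.coeff_sum]
  have h3 : ∀ c ∈ F, MvPolynomial.coeff (Finsupp.single 0 2 + Finsupp.single 1 k)
      ((X 0 : Rp) ^ 2 * X 1 ^ e c) = if e c = k then (1:ℚ) else 0 := by
    intro c _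
    rw [h1, MvPolynomial.coeff_monomial]
    congr 1
    simp only [eq_iff_iff]
    constructor
    · intro h
      have := DFunLike.congr_fun h (1 : Fin 2)
      simpa [Finsupp.single_apply] using this
    · rintro rfl; rfl
  rw [Finset.sum_congr rfl h3, Finset.sum_boole]

end CYAux

theorem cY_injective : Function.Injective cY := by
  open CYAux Finset MvPolynomial in
  intro l m h
  unfold cY at h
  have h1 := add_left_cancel h
  have h2 := mul_left_cancel₀ ss_ne h1
  set N : ℕ := l.cells.card + m.cells.card + 1 with hNdef
  have hNl : l.cells.card ≤ N := by omega
  have hNm : m.cells.card ≤ N := by omega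
  -- multiply by α * s^(2N)
  have e : ∀ A B : Kf, α * s ^ (2 * (N:ℤ)) * (α * A - α⁻¹ * B)
      = α ^ 2 * (s ^ (2 * (N:ℤ)) * A) - s ^ (2 * (N:ℤ)) * B := by
    intro A B
    have hα : α * α⁻¹ = 1 := mul_inv_cancel₀ α_ne
    calc α * s ^ (2 * (N:ℤ)) * (α * A - α⁻¹ * B)
        = α ^ 2 * (s ^ (2 * (N:ℤ)) * A) - (α * α⁻¹) * (s ^ (2 * (N:ℤ)) * B) := by ring
      _ = α ^ 2 * (s ^ (2 * (N:ℤ)) * A) - s ^ (2 * (N:ℤ)) * B := by rw [hα, one_mul]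
  have h3 := congrArg (fun x => α * s ^ (2 * (N:ℤ)) * x) h2
  simp only [e] at h3
  rw [key l N hNl, key m N hNm] at h3
  have h4 := phi_inj h3
  -- content counts agree
  have hcount : ∀ t : ℤ, mcount l t = mcount m t := by
    intro t
    rcases le_or_gt (-(N:ℤ)) t with ht | ht
    · set k : ℕ := (2 * (N:ℤ) + 2 * t).toNat with hk
      have h5 := congrArg (MvPolynomial.coeff (Finsupp.single 0 2 + Finsupp.single 1 k)) h4
      rw [coeff_eq, coeff_eq] at h5
      have h6 : (l.cells.filter fun c => (2 * (N:ℤ) + 2 * cn c).toNat = k).card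
          = (m.cells.filter fun c => (2 * (N:ℤ) + 2 * cn c).toNat = k).card := by
        exact_mod_cast h5
      have hfl : ∀ (d : YoungDiagram), d.cells.card ≤ N →
          (d.cells.filter fun c => (2 * (N:ℤ) + 2 * cn c).toNat = k)
          = d.cells.filter fun c => cn c = t := by
        intro d hd
        apply Finset.filter_congr
        intro c hc
        obtain ⟨h1', h2'⟩ := cell_bound hc
        have hb : -(N:ℤ) < cn c ∧ cn c < N := by unfold cn; omega
        simp only [eq_iff_iff, hk]
        omega
      rw [hfl l hNl, hfl m hNm] at h6
      exact h6
    · unfold mcount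
      rw [Finset.filter_eq_empty_iff.mpr, Finset.filter_eq_empty_iff.mpr]
      · intro c hc
        obtain ⟨h1', h2'⟩ := cell_bound hc
        unfold cn
        omega
      · intro c hc
        obtain ⟨h1', h2'⟩ := cell_bound hc
        unfold cn
        omega
  exact eq_of_mcount_eq hcount
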